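/- Let columns C_1, C_2, ... be i.i.d. uniform on F_2^k and requests R_1, R_2, ... be i.i.d. uniform on F_2^k \ {0}, with the two processes independent. Let V_n be the largest V such that the requests R_1, ..., R_V can be served from the columns C_1, ..., C_n by pairwise disjoint recovery sets. Then V_n / n → 1 − 2^{-k} almost surely. -/

import Mathlib

open MeasureTheory ProbabilityTheory Filter
open scoped ENNReal

/-- A request sequence `R` can be served from the multiset of columns `G` by
pairwise disjoint recovery sets (disjointness encoded by `∑ i, S i ≤ G`). -/
def Serves {k : ℕ} (G : Multiset (Fin k → ZMod 2)) {t : ℕ}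
    (R : Fin t → (Fin k → ZMod 2)) : Prop :=
  ∃ S : Fin t → Multiset (Fin k → ZMod 2), (∑ i, S i) ≤ G ∧ ∀ i, (S i).sum = R i

section Aux

variable {α : Type*} [DecidableEq α]

lemma aux_count_ofFn (n : ℕ) (f : ℕ → α) (w : α) :
    Multiset.count w ((List.ofFn fun i : Fin n => f (i : ℕ) : List α) : Multiset α)
      = ∑ i ∈ Finset.range n, if f i = w then 1 else 0 := by
  induction n generalizing f with
  | zero => simp
  | succ n ih =>
    rw [Finset.sum_range_succ']
    simp only [List.ofFn_succ, Multiset.coe_count] at *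
    rw [List.count_cons]
    simp only [Fin.val_succ]
    rw [ih (fun i => f (i+1))]
    by_cases h : f 0 = w <;> simp [h, beq_iff_eq, add_comm]

lemma aux_card_filter_sum {t : ℕ} (p : α → Prop) [DecidablePred p]
    (S : Fin t → Multiset α) :
    Multiset.card (Multiset.filter p (∑ i, S i)) = ∑ i, Multiset.card (Multiset.filter p (S i)) := by
  classical
  induction t with
  | zero => simp
  | succ t ih =>
    rw [Fin.sum_univ_succ, Fin.sum_univ_succ, Multiset.filter_add, Multiset.card_add,
      ih (fun i => S i.succ)]

/-- Upper bound: a served prefix has length at most the number of nonzero columns. -/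
lemma aux_serves_le {k t : ℕ} {G : Multiset (Fin k → ZMod 2)}
    {R : Fin t → (Fin k → ZMod 2)} (h : Serves G R) (h0 : ∀ i, R i ≠ 0) :
    t ≤ Multiset.card (G.filter (fun x => ¬ (x = 0))) := by
  classical
  obtain ⟨S, hle, hsum⟩ := h
  have hone : ∀ i, 1 ≤ Multiset.card ((S i).filter (fun x => ¬ (x = 0))) := by
    intro i
    have : ∃ x ∈ S i, x ≠ 0 := by
      by_contra hcon
      push_neg at hcon
      exact h0 i (by rw [← hsum i]; exact Multiset.sum_eq_zero hcon)
    obtain ⟨x, hx, hx0⟩ := this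
    have : x ∈ (S i).filter (fun x => ¬ (x = 0)) := Multiset.mem_filter.2 ⟨hx, hx0⟩
    exact Multiset.card_pos.2 (fun he => by simp [he] at this)
  calc t = ∑ _i : Fin t, 1 := by simp
    _ ≤ ∑ i, Multiset.card ((S i).filter (fun x => ¬ (x = 0))) :=
        Finset.sum_le_sum fun i _ => hone i
    _ = Multiset.card (Multiset.filter (fun x => ¬ (x = 0)) (∑ i, S i)) :=
        (aux_card_filter_sum _ _).symm
    _ ≤ Multiset.card (G.filter (fun x => ¬ (x = 0))) :=
        Multiset.card_le_card (Multiset.filter_le_filter _ hle)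

/-- Lower bound: if every value occurs at least as often among the columns as among the
first `v` requests, the prefix can be served by singletons. -/
lemma aux_serves_of_count {k v : ℕ} {G : Multiset (Fin k → ZMod 2)}
    (R : ℕ → (Fin k → ZMod 2))
    (hcount : ∀ w, (∑ i ∈ Finset.range v, if R i = w then 1 else 0) ≤ Multiset.count w G) :
    Serves G (fun i : Fin v => R (i : ℕ)) := by
  classical
  refine ⟨fun i => {R (i : ℕ)}, ?_, fun i => by simp⟩
  rw [Multiset.le_iff_count]
  intro w
  refine le_trans ?_ (hcount w)
  rw [Multiset.count_sum', ← Fin.sum_univ_eq_sum_range (fun i => if R i = w then 1 else 0) v]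
  apply le_of_eq
  refine Finset.sum_congr rfl fun i _ => ?_
  simp [Multiset.count_singleton, eq_comm]

end Aux

/-- SLLN for indicator of a fixed value, for an i.i.d. sequence in a countable space. -/
lemma aux_slln {Ω : Type*} [MeasureSpace Ω] [IsProbabilityMeasure (ℙ : Measure Ω)]
    {α : Type*} [MeasurableSpace α] [MeasurableSingletonClass α] [Countable α] [DecidableEq α]
    (X : ℕ → Ω → α) (hm : ∀ i, Measurable (X i))
    (hpind : Pairwise (Function.onFun (IndepFun · · ℙ) X))
    (hident : ∀ i w, ℙ {ω | X i ω = w} = ℙ {ω | X 0 ω = w}) (w : α) :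
    ∀ᵐ ω ∂ℙ, Tendsto (fun n => (∑ i ∈ Finset.range n, if X i ω = w then (1:ℝ) else 0) / n)
      atTop (nhds (ℙ {ω | X 0 ω = w}).toReal) := by
  classical
  set φ : α → ℝ := fun x => if x = w then 1 else 0 with hφdef
  have hφ : Measurable φ := by
    apply Measurable.ite _ measurable_const measurable_const
    exact measurableSet_eq
  set Y : ℕ → Ω → ℝ := fun i ω => if X i ω = w then 1 else 0 with hYdef
  have hYind : ∀ i, Y i = Set.indicator {ω | X i ω = w} (fun _ => (1:ℝ)) := by
    intro i; funext ω; simp [hYdef, Set.indicator_apply, Set.mem_setOf_eq]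
  have hYmeas : ∀ i, MeasurableSet {ω | X i ω = w} := fun i =>
    (hm i) (measurableSet_singleton w)
  have hint : Integrable (Y 0) ℙ := by
    rw [hYind 0]
    exact (integrable_const (1:ℝ)).indicator (hYmeas 0)
  have hYφ : ∀ i, Y i = φ ∘ X i := by intro i; rfl
  have hindep : Pairwise (Function.onFun (IndepFun · · ℙ) Y) := by
    intro i j hij
    have := (hpind hij).comp hφ hφ
    simpa [Function.onFun, ← hYφ] using this
  have hid : ∀ i, IdentDistrib (Y i) (Y 0) ℙ ℙ := by
    intro i
    have hXid : IdentDistrib (X i) (X 0) ℙ ℙ := by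
      refine ⟨(hm i).aemeasurable, (hm 0).aemeasurable, ?_⟩
      apply MeasureTheory.Measure.ext_of_singleton
      intro a
      rw [Measure.map_apply (hm i) (measurableSet_singleton a),
        Measure.map_apply (hm 0) (measurableSet_singleton a)]
      exact hident i a
    have := hXid.comp hφ
    simpa [← hYφ] using this
  have hmean : (∫ ω, Y 0 ω ∂ℙ) = (ℙ {ω | X 0 ω = w}).toReal := by
    rw [hYind 0, integral_indicator_const (1:ℝ) (hYmeas 0), smul_eq_mul, mul_one, measureReal_def]
  have := ProbabilityTheory.strong_law_ae Y hint hindep hid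
  filter_upwards [this] with ω hω
  have : Tendsto (fun n : ℕ => (n:ℝ)⁻¹ • ∑ i ∈ Finset.range n, Y i ω) atTop
      (nhds (ℙ {ω | X 0 ω = w}).toReal) := by rwa [← hmean]
  refine this.congr fun n => ?_
  simp [smul_eq_mul, div_eq_inv_mul, hYdef]


/-- Deterministic part: convergence of empirical frequencies implies the limit for `V_n/n`. -/
lemma aux_det (k : ℕ) (hk : 1 ≤ k) (Cf Rf : ℕ → (Fin k → ZMod 2))
    (hR0 : ∀ i, Rf i ≠ 0)
    (hc : ∀ w, Tendsto
      (fun n : ℕ => (∑ i ∈ Finset.range n, if Cf i = w then (1:ℝ) else 0) / n)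
      atTop (nhds (((2:ℝ) ^ k)⁻¹)))
    (hr : ∀ w, w ≠ 0 → Tendsto
      (fun n : ℕ => (∑ i ∈ Finset.range n, if Rf i = w then (1:ℝ) else 0) / n)
      atTop (nhds (((2:ℝ) ^ k - 1)⁻¹))) :
    Tendsto (fun n : ℕ =>
        ((sSup {v : ℕ |
            Serves ((List.ofFn fun i : Fin n => Cf (i : ℕ) : List (Fin k → ZMod 2)) :
                Multiset (Fin k → ZMod 2))
              (fun i : Fin v => Rf (i : ℕ))} : ℕ) : ℝ) / n)
      atTop (nhds (1 - 1 / 2 ^ k)) := by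
  classical
  set p : ℝ := ((2:ℝ) ^ k)⁻¹ with hpdef
  set q : ℝ := ((2:ℝ) ^ k - 1)⁻¹ with hqdef
  set L : ℝ := 1 - 1 / 2 ^ k with hLdef
  have h2k : (2:ℝ) ≤ 2 ^ k := by
    calc (2:ℝ) = 2 ^ 1 := (pow_one 2).symm
    _ ≤ 2 ^ k := by
      apply pow_le_pow_right₀ one_le_two hk
  have h2kpos : (0:ℝ) < 2 ^ k := by positivity
  have hp : 0 < p := by rw [hpdef]; positivity
  have hq : 0 < q := by rw [hqdef]; exact inv_pos.2 (by linarith)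
  have hLp : L = 1 - p := by rw [hLdef, hpdef, one_div]
  have hL : 0 < L := by
    rw [hLp]
    have : p ≤ 2⁻¹ := by
      rw [hpdef]
      exact inv_anti₀ two_pos h2k
    linarith
  have hL1 : L < 1 := by rw [hLp]; linarith
  have hpk : p * 2 ^ k = 1 := by rw [hpdef]; exact inv_mul_cancel₀ (ne_of_gt h2kpos)
  have hpLq : p = L * q := by
    rw [hLp]
    have hstep : 1 - p = p * ((2:ℝ) ^ k - 1) := by rw [mul_sub, hpk, mul_one]
    rw [hstep, mul_assoc, hqdef, mul_inv_cancel₀ (by linarith : (2:ℝ) ^ k - 1 ≠ 0), mul_one]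
  clear_value p q L
  -- notation
  set Gm : ℕ → Multiset (Fin k → ZMod 2) :=
    fun n => ((List.ofFn fun i : Fin n => Cf (i : ℕ) : List (Fin k → ZMod 2)) :
      Multiset (Fin k → ZMod 2)) with hGmdef
  set Sv : ℕ → Set ℕ := fun n => {v : ℕ | Serves (Gm n) (fun i : Fin v => Rf (i : ℕ))}
    with hSvdef
  set V : ℕ → ℕ := fun n => sSup (Sv n) with hVdef
  have hcard : ∀ n, Multiset.card (Gm n) = n := by
    intro n; simp [hGmdef]
  have hne : ∀ n, (Sv n).Nonempty := by
    intro n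
    exact ⟨0, ⟨fun i => i.elim0, by simp, fun i => i.elim0⟩⟩
  have hbdd : ∀ n, BddAbove (Sv n) := by
    intro n
    refine ⟨Multiset.card ((Gm n).filter (fun x => ¬ (x = 0))), fun v hv => ?_⟩
    exact aux_serves_le hv (fun i => hR0 _)
  have hVmem : ∀ n, V n ∈ Sv n := fun n => Nat.sSup_mem (hne n) (hbdd n)
  have hVub : ∀ n v, v ∈ Sv n → v ≤ V n := fun n v hv => le_csSup (hbdd n) hv
  -- counts
  set cnt : (Fin k → ZMod 2) → ℕ → ℕ :=
    fun w n => ∑ i ∈ Finset.range n, if Cf i = w then 1 else 0 with hcntdef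
  set rcnt : (Fin k → ZMod 2) → ℕ → ℕ :=
    fun w v => ∑ i ∈ Finset.range v, if Rf i = w then 1 else 0 with hrcntdef
  have hcnt_count : ∀ w n, Multiset.count w (Gm n) = cnt w n := by
    intro w n; rw [hGmdef, hcntdef]; exact aux_count_ofFn n Cf w
  have hcN : ∀ w, Tendsto (fun n => ((cnt w n : ℕ) : ℝ) / n) atTop (nhds p) := by
    intro w
    refine (hc w).congr fun n => ?_
    rw [hcntdef]
    push_cast
    rfl
  have hrN : ∀ w, w ≠ 0 → Tendsto (fun n => ((rcnt w n : ℕ) : ℝ) / n) atTop (nhds q) := by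
    intro w hw
    refine (hr w hw).congr fun n => ?_
    rw [hrcntdef]
    push_cast
    rfl
  rw [tendsto_order]
  constructor
  · -- lower bound
    intro b hb
    rcases lt_or_ge b 0 with hb0 | hb0
    · filter_upwards with n
      exact lt_of_lt_of_le hb0 (by positivity)
    obtain ⟨a, hba, haL⟩ : ∃ a : ℝ, b < a ∧ a < L :=
      ⟨(b + L) / 2, by linarith, by linarith⟩
    have ha0 : 0 < a := lt_of_le_of_lt hb0 hba
    have ha1 : a < 1 := lt_trans haL hL1
    obtain ⟨η, hη, hkey⟩ : ∃ η : ℝ, 0 < η ∧ (L - a) * q / 2 ≤ p - η - a * (q + η) := by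
      refine ⟨(L - a) * q / 4, div_pos (mul_pos (by linarith) hq) (by norm_num), ?_⟩
      nlinarith [hpLq, mul_nonneg (mul_nonneg (by linarith : (0:ℝ) ≤ L - a) hq.le)
        (by linarith : (0:ℝ) ≤ 1 - a)]
    have hc2 : (0:ℝ) < (L - a) * q / 2 := div_pos (mul_pos (by linarith) hq) (by norm_num)
    set vn : ℕ → ℕ := fun n => ⌈a * n⌉₊ with hvndef
    have hv : Tendsto vn atTop atTop := by
      apply tendsto_nat_ceil_atTop.comp
      exact Tendsto.const_mul_atTop ha0 tendsto_natCast_atTop_atTop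
    have E1 : ∀ᶠ n : ℕ in atTop, ∀ w : Fin k → ZMod 2, w ≠ 0 →
        ((rcnt w (vn n) : ℕ) : ℝ) ≤ (q + η) * vn n := by
      rw [eventually_all]
      intro w
      by_cases hw : w = 0
      · filter_upwards with n h; exact absurd hw h
      have h1 := ((hrN w hw).comp hv).eventually_lt_const (show q < q + η by linarith)
      filter_upwards [h1, hv.eventually_ge_atTop 1] with n h1 h2 _
      have hvpos : (0:ℝ) < vn n := by exact_mod_cast h2
      have := (div_lt_iff₀ hvpos).1 h1
      linarith
    have E2 : ∀ᶠ n : ℕ in atTop, ∀ w : Fin k → ZMod 2,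
        (p - η) * n ≤ ((cnt w n : ℕ) : ℝ) := by
      rw [eventually_all]
      intro w
      have h1 := (hcN w).eventually_const_lt (show p - η < p by linarith)
      filter_upwards [h1, eventually_ge_atTop 1] with n h1 h2
      have hnpos : (0:ℝ) < n := by exact_mod_cast h2
      have := (lt_div_iff₀ hnpos).1 h1
      linarith
    have E3 : ∀ᶠ n : ℕ in atTop, (q + η) * (a * n + 1) ≤ (p - η) * n := by
      have hcast := tendsto_natCast_atTop_atTop (R := ℝ)
      filter_upwards [hcast.eventually_ge_atTop ((q + η) / ((L - a) * q / 2))]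
        with n hn
      rw [div_le_iff₀ hc2] at hn
      nlinarith [hn, hkey]
    filter_upwards [E1, E2, E3, eventually_ge_atTop 1] with n h1 h2 h3 h4
    have hnpos : (0:ℝ) < n := by exact_mod_cast h4
    have hserve : vn n ∈ Sv n := by
      rw [hSvdef]
      apply aux_serves_of_count
      intro w
      rw [hcnt_count w n]
      by_cases hw : w = 0
      · have hz : (∑ i ∈ Finset.range (vn n), if Rf i = w then 1 else 0) = 0 := by
          apply Finset.sum_eq_zero
          intro i _
          simp [hw, hR0 i]
        rw [hz]
        exact Nat.zero_le _
      · have hcast : ((rcnt w (vn n) : ℕ) : ℝ) ≤ ((cnt w n : ℕ) : ℝ) := by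
          have hvle : ((vn n : ℕ) : ℝ) ≤ a * n + 1 := by
            rw [hvndef]
            exact (Nat.ceil_lt_add_one (by positivity)).le
          have hqη : 0 ≤ q + η := by linarith
          calc ((rcnt w (vn n) : ℕ) : ℝ) ≤ (q + η) * vn n := h1 w hw
            _ ≤ (q + η) * (a * n + 1) := by nlinarith
            _ ≤ (p - η) * n := h3
            _ ≤ ((cnt w n : ℕ) : ℝ) := h2 w
        have hnat : rcnt w (vn n) ≤ cnt w n := by exact_mod_cast hcast
        exact hnat
    have hVge : vn n ≤ V n := hVub n _ hserve
    have han : a * n ≤ (vn n : ℝ) := by rw [hvndef]; exact Nat.le_ceil _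
    have : a ≤ ((V n : ℕ) : ℝ) / n := by
      rw [le_div_iff₀ hnpos]
      calc a * n ≤ (vn n : ℝ) := han
        _ ≤ ((V n : ℕ) : ℝ) := by exact_mod_cast hVge
    exact lt_of_lt_of_le hba this
  · -- upper bound
    intro b hb
    have hbL : L < b := hb
    have hub : ∀ n, ((V n : ℕ) : ℝ) ≤ n - ((cnt 0 n : ℕ) : ℝ) := by
      intro n
      have h2 := aux_serves_le (hVmem n) (fun i => hR0 _)
      have hcount0 : cnt 0 n = Multiset.card ((Gm n).filter (fun x => x = 0)) := by
        rw [← hcnt_count, Multiset.count, Multiset.countP_eq_card_filter]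
        congr 1
        apply Multiset.filter_congr
        intro x _
        exact eq_comm
      have h5 := congrArg Multiset.card (Multiset.filter_add_not (fun x => x = 0) (Gm n))
      rw [Multiset.card_add, hcard] at h5
      have h4 : V n + cnt 0 n ≤ n := by
        rw [hcount0]
        omega
      have := (Nat.cast_le (α := ℝ)).2 h4
      push_cast at this
      linarith
    have hTend : Tendsto (fun n : ℕ => 1 - ((cnt 0 n : ℕ) : ℝ) / n) atTop (nhds (1 - p)) :=
      tendsto_const_nhds.sub (hcN 0)
    have hev := hTend.eventually_lt_const (show 1 - p < b by rw [← hLp]; exact hbL)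
    filter_upwards [hev, eventually_ge_atTop 1] with n h1 h4
    have hnpos : (0:ℝ) < n := by exact_mod_cast h4
    calc ((V n : ℕ) : ℝ) / n ≤ (n - ((cnt 0 n : ℕ) : ℝ)) / n := by
          apply div_le_div_of_nonneg_right (hub n) hnpos.le
      _ = 1 - ((cnt 0 n : ℕ) : ℝ) / n := by field_simp
      _ < b := h1

theorem servable_prefix_div_n_tendsto (k : ℕ)
    {Ω : Type*} [MeasureSpace Ω] [IsProbabilityMeasure (ℙ : Measure Ω)]
    (C : ℕ → Ω → (Fin k → ZMod 2)) (R : ℕ → Ω → (Fin k → ZMod 2))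
    (hmC : ∀ i, Measurable (C i)) (hmR : ∀ i, Measurable (R i))
    (hindep : iIndepFun (Sum.elim C R) ℙ)
    (hunifC : ∀ i (v : Fin k → ZMod 2), ℙ {ω | C i ω = v} = ((2 : ℝ≥0∞) ^ k)⁻¹)
    (hR0 : ∀ i ω, R i ω ≠ 0)
    (hunifR : ∀ i (v : Fin k → ZMod 2), v ≠ 0 →
      ℙ {ω | R i ω = v} = ((2 : ℝ≥0∞) ^ k - 1)⁻¹) :
    ∀ᵐ ω ∂ℙ, Tendsto
      (fun n : ℕ =>
        ((sSup {v : ℕ |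
            Serves ((List.ofFn fun i : Fin n => C (i : ℕ) ω : List (Fin k → ZMod 2)) :
                Multiset (Fin k → ZMod 2))
              (fun i : Fin v => R (i : ℕ) ω)} : ℕ) : ℝ) / n)
      atTop (nhds (1 - 1 / 2 ^ k)) := by
  classical
  rcases Nat.eq_zero_or_pos k with hk0 | hk
  · -- degenerate case: `k = 0` contradicts `R i ω ≠ 0`
    exfalso
    rcases isEmpty_or_nonempty Ω with hΩ | hΩ
    · have h1 : (ℙ : Measure Ω) Set.univ = 1 := measure_univ
      rw [Set.univ_eq_empty_iff.2 hΩ, measure_empty] at h1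
      exact zero_ne_one h1
    · obtain ⟨ω⟩ := hΩ
      subst hk0
      exact hR0 0 ω (funext fun i => i.elim0)
  -- independence of the column process and of the request process
  have hpindC : Pairwise (Function.onFun (IndepFun · · ℙ) C) := by
    intro i j hij
    exact hindep.indepFun (show (Sum.inl i : ℕ ⊕ ℕ) ≠ Sum.inl j by simpa using hij)
  have hpindR : Pairwise (Function.onFun (IndepFun · · ℙ) R) := by
    intro i j hij
    exact hindep.indepFun (show (Sum.inr i : ℕ ⊕ ℕ) ≠ Sum.inr j by simpa using hij)
  have hidC : ∀ i (w : Fin k → ZMod 2), ℙ {ω | C i ω = w} = ℙ {ω | C 0 ω = w} := by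
    intro i w; rw [hunifC i w, hunifC 0 w]
  have hidR : ∀ i (w : Fin k → ZMod 2), ℙ {ω | R i ω = w} = ℙ {ω | R 0 ω = w} := by
    intro i w
    by_cases hw : w = 0
    · subst hw
      have he : ∀ j, {ω | R j ω = 0} = (∅ : Set Ω) := fun j =>
        Set.eq_empty_iff_forall_notMem.2 fun ω hω => hR0 j ω hω
      rw [he i, he 0]
    · rw [hunifR i w hw, hunifR 0 w hw]
  have h2top : ((2 : ℝ≥0∞) ^ k) ≠ ⊤ := by
    exact ENNReal.pow_ne_top (by norm_num)
  have h12 : (1 : ℝ≥0∞) ≤ (2 : ℝ≥0∞) ^ k := by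
    calc (1 : ℝ≥0∞) = 1 ^ k := (one_pow k).symm
    _ ≤ 2 ^ k := by gcongr <;> norm_num
  have hCa : ∀ w : Fin k → ZMod 2, ∀ᵐ ω ∂ℙ, Tendsto
      (fun n : ℕ => (∑ i ∈ Finset.range n, if C i ω = w then (1:ℝ) else 0) / n)
      atTop (nhds (((2:ℝ) ^ k)⁻¹)) := by
    intro w
    have hlim : (ℙ {ω | C 0 ω = w}).toReal = ((2:ℝ) ^ k)⁻¹ := by
      rw [hunifC 0 w, ENNReal.toReal_inv]
      norm_num
    have := aux_slln C hmC hpindC hidC w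
    rwa [hlim] at this
  have hRa : ∀ w : Fin k → ZMod 2, ∀ᵐ ω ∂ℙ, (w ≠ 0 → Tendsto
      (fun n : ℕ => (∑ i ∈ Finset.range n, if R i ω = w then (1:ℝ) else 0) / n)
      atTop (nhds (((2:ℝ) ^ k - 1)⁻¹))) := by
    intro w
    by_cases hw : w = 0
    · filter_upwards with ω h; exact absurd hw h
    have hlim : (ℙ {ω | R 0 ω = w}).toReal = ((2:ℝ) ^ k - 1)⁻¹ := by
      rw [hunifR 0 w hw, ENNReal.toReal_inv, ENNReal.toReal_sub_of_le h12 h2top]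
      norm_num
    have := aux_slln R hmR hpindR hidR w
    rw [hlim] at this
    filter_upwards [this] with ω hω _
    exact hω
  filter_upwards [ae_all_iff.2 hCa, ae_all_iff.2 hRa] with ω hCω hRω
  exact aux_det k hk (fun i => C i ω) (fun i => R i ω) (fun i => hR0 i ω) hCω
    (fun w hw => hRω w hw)
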